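/- Let E be a positive linear map on the cone of positive vectors in ℝⁿ whose projective diameter Δ(E) is finite. Then E is a strict contraction in the Hilbert projective metric with contraction ratio κ(E) ≤ tanh(Δ(E)/4) < 1. -/

import Mathlib

open Real

/-- The Hilbert projective metric on the positive orthant of `ℝⁿ`. -/
noncomputable def dHpos {n : ℕ} (x y : Fin n → ℝ) : ℝ :=
  Real.log ((⨆ i, x i / y i) / (⨅ i, x i / y i))

/- ## Auxiliary lemmas about `tanh` -/

lemma aux_tanh_lt_one (x : ℝ) : Real.tanh x < 1 := by
  rw [Real.tanh_eq_sinh_div_cosh, div_lt_one (Real.cosh_pos x)]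
  exact Real.sinh_lt_cosh x

lemma aux_tanh_nonneg {x : ℝ} (hx : 0 ≤ x) : 0 ≤ Real.tanh x := by
  rw [Real.tanh_eq_sinh_div_cosh]
  exact div_nonneg (Real.sinh_nonneg_iff.mpr hx) (Real.cosh_pos x).le

lemma aux_tanh_sub_eq (a b : ℝ) :
    Real.tanh a - Real.tanh b = Real.sinh (a - b) / (Real.cosh a * Real.cosh b) := by
  rw [Real.tanh_eq_sinh_div_cosh, Real.tanh_eq_sinh_div_cosh, Real.sinh_sub,
    div_sub_div _ _ (Real.cosh_pos a).ne' (Real.cosh_pos b).ne']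

lemma aux_tanh_mono {a b : ℝ} (h : b ≤ a) : Real.tanh b ≤ Real.tanh a := by
  have h1 : 0 ≤ Real.sinh (a - b) := Real.sinh_nonneg_iff.mpr (by linarith)
  have h2 : 0 < Real.cosh a * Real.cosh b := mul_pos (Real.cosh_pos a) (Real.cosh_pos b)
  have := aux_tanh_sub_eq a b
  nlinarith [div_nonneg h1 h2.le]

/-- Key elementary inequality: `tanh a - tanh b ≤ 2 tanh((a-b)/2)`. -/
lemma aux_tanh_sub_le {a b : ℝ} (h : b ≤ a) :
    Real.tanh a - Real.tanh b ≤ 2 * Real.tanh ((a - b) / 2) := by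
  set δ := a - b with hδ
  have hδ0 : 0 ≤ δ := by simp [hδ]; linarith
  have hcc : Real.cosh (δ / 2) ^ 2 ≤ Real.cosh a * Real.cosh b := by
    have e1 : Real.cosh a * Real.cosh b = (Real.cosh (a + b) + Real.cosh (a - b)) / 2 := by
      rw [Real.cosh_add, Real.cosh_sub]; ring
    have e2 : Real.cosh δ = 2 * Real.cosh (δ / 2) ^ 2 - 1 := by
      rw [show δ = 2 * (δ / 2) by ring, Real.cosh_two_mul, Real.sinh_sq]; ring
    rw [e1, ← hδ, e2]
    nlinarith [Real.one_le_cosh (a + b)]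
  have hsinh : Real.sinh δ = 2 * Real.sinh (δ / 2) * Real.cosh (δ / 2) := by
    rw [show δ = 2 * (δ / 2) by ring, Real.sinh_two_mul]
    ring_nf
  have hchpos : 0 < Real.cosh (δ / 2) ^ 2 := pow_pos (Real.cosh_pos _) 2
  have hcab : 0 < Real.cosh a * Real.cosh b := mul_pos (Real.cosh_pos a) (Real.cosh_pos b)
  have hs0 : 0 ≤ Real.sinh δ := Real.sinh_nonneg_iff.mpr hδ0
  calc Real.tanh a - Real.tanh b = Real.sinh δ / (Real.cosh a * Real.cosh b) :=
        aux_tanh_sub_eq a b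
    _ ≤ Real.sinh δ / Real.cosh (δ / 2) ^ 2 := by
        apply div_le_div_of_nonneg_left hs0 hchpos hcc
    _ = 2 * Real.tanh (δ / 2) := by
        rw [hsinh, Real.tanh_eq_sinh_div_cosh]
        field_simp [(Real.cosh_pos (δ / 2)).ne']

/- ## The key monotonicity/MVT lemma -/

/-- The main analytic estimate. -/
lemma aux_J_bound {s s' c Δ : ℝ} (hss : s ≤ s') (hL : s' - s ≤ Δ) (hc : 0 ≤ c) :
    (Real.log (Real.cosh (s' / 2)) - Real.log (Real.cosh ((s' - c) / 2)))
      - (Real.log (Real.cosh (s / 2)) - Real.log (Real.cosh ((s - c) / 2)))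
    ≤ Real.tanh (Δ / 4) * c := by
  set G : ℝ → ℝ := fun β => Real.tanh (Δ / 4) * β
      + Real.log (Real.cosh ((s' - β) / 2)) - Real.log (Real.cosh ((s - β) / 2)) with hG
  have hderiv : ∀ β : ℝ, HasDerivAt G
      (Real.tanh (Δ / 4) - Real.tanh ((s' - β) / 2) / 2 + Real.tanh ((s - β) / 2) / 2) β := by
    intro β
    have base : ∀ w : ℝ, HasDerivAt (fun β : ℝ => Real.log (Real.cosh ((w - β) / 2)))
        (-(Real.tanh ((w - β) / 2) / 2)) β := by
      intro w
      have h1 : HasDerivAt (fun β : ℝ => (w - β) / 2) (-1 / 2) β := by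
        have := ((hasDerivAt_const β w).sub (hasDerivAt_id β)).div_const 2
        simpa using this
      have h2 : HasDerivAt (fun β : ℝ => Real.cosh ((w - β) / 2))
          (Real.sinh ((w - β) / 2) * (-1 / 2)) β :=
        (Real.hasDerivAt_cosh _).comp β h1
      have h3 := h2.log (Real.cosh_pos _).ne'
      convert h3 using 1
      rw [Real.tanh_eq_sinh_div_cosh]
      ring
    have h4 : HasDerivAt (fun β : ℝ => Real.tanh (Δ / 4) * β) (Real.tanh (Δ / 4)) β := by
      simpa using (hasDerivAt_id β).const_mul (Real.tanh (Δ / 4))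
    have := (h4.add (base s')).sub (base s)
    exact this.congr_deriv (by ring)
  have hmono : Monotone G := by
    apply monotone_of_deriv_nonneg
    · exact fun β => (hderiv β).differentiableAt
    · intro β
      rw [(hderiv β).deriv]
      have h1 : Real.tanh ((s' - β) / 2) - Real.tanh ((s - β) / 2)
          ≤ 2 * Real.tanh (((s' - β) / 2 - (s - β) / 2) / 2) :=
        aux_tanh_sub_le (by linarith)
      have h2 : ((s' - β) / 2 - (s - β) / 2) / 2 = (s' - s) / 4 := by ring
      have h3 : Real.tanh ((s' - s) / 4) ≤ Real.tanh (Δ / 4) :=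
        aux_tanh_mono (by linarith)
      rw [h2] at h1
      linarith
  have := hmono hc
  simp only [hG, mul_zero, zero_add, sub_zero] at this
  linarith

/- ## Rewriting `log ((M + m ρ)/(1 + ρ))` in `log cosh` form -/

lemma aux_f_form {m M ρ : ℝ} (hm : 0 < m) (hM : 0 < M) (hρ : 0 < ρ) :
    Real.log ((M + m * ρ) / (1 + ρ)) =
      Real.log m + Real.log (M / m) / 2
      + Real.log (Real.cosh ((Real.log ρ - Real.log (M / m)) / 2))
      - Real.log (Real.cosh (Real.log ρ / 2)) := by
  set c := Real.log (M / m) with hc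
  set t := Real.log ρ with ht
  have hMm : M = m * Real.exp c := by
    rw [hc, Real.exp_log (div_pos hM hm)]
    field_simp
  have hρe : ρ = Real.exp t := (Real.exp_log hρ).symm
  have hec : Real.exp c = Real.exp (c / 2) * Real.exp (c / 2) := by
    rw [← Real.exp_add]; ring_nf
  have het : Real.exp t = Real.exp (t / 2) * Real.exp (t / 2) := by
    rw [← Real.exp_add]; ring_nf
  have hetc : Real.exp ((t - c) / 2) = Real.exp (t / 2) / Real.exp (c / 2) := by
    rw [show (t - c) / 2 = t / 2 - c / 2 by ring, Real.exp_sub]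
  have hetc' : Real.exp (-((t - c) / 2)) = Real.exp (c / 2) / Real.exp (t / 2) := by
    rw [show -((t - c) / 2) = c / 2 - t / 2 by ring, Real.exp_sub]
  have hetm : Real.exp (-(t / 2)) = 1 / Real.exp (t / 2) := by
    rw [Real.exp_neg]; exact inv_eq_one_div _
  have hP : (0:ℝ) < Real.exp (c / 2) := Real.exp_pos _
  have hQ : (0:ℝ) < Real.exp (t / 2) := Real.exp_pos _
  have hval : (M + m * ρ) / (1 + ρ)
      = m * Real.exp (c / 2) * (Real.cosh ((t - c) / 2) / Real.cosh (t / 2)) := by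
    rw [Real.cosh_eq, Real.cosh_eq, hMm, hρe, hec, het, hetc, hetc', hetm]
    have h1ρ : (0:ℝ) < 1 + Real.exp (t / 2) * Real.exp (t / 2) := by positivity
    field_simp
    ring
  rw [hval, Real.log_mul (by positivity) (by positivity),
    Real.log_mul hm.ne' (Real.exp_pos _).ne', Real.log_exp,
    Real.log_div (Real.cosh_pos _).ne' (Real.cosh_pos _).ne']
  ring

/- ## The core contraction inequality -/

lemma aux_core {m M τ T Δ : ℝ} (hm : 0 < m) (hmM : m ≤ M) (hτ : 0 < τ) (hτT : τ ≤ T)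
    (hTτ : Real.log T - Real.log τ ≤ Δ) :
    Real.log ((M + m * τ) / (1 + τ)) - Real.log ((M + m * T) / (1 + T))
      ≤ Real.tanh (Δ / 4) * Real.log (M / m) := by
  have hM : 0 < M := lt_of_lt_of_le hm hmM
  have hT : 0 < T := lt_of_lt_of_le hτ hτT
  rw [aux_f_form hm hM hτ, aux_f_form hm hM hT]
  set c := Real.log (M / m) with hc
  set s := Real.log τ with hs
  set s' := Real.log T with hs'
  have hc0 : 0 ≤ c := Real.log_nonneg ((one_le_div hm).mpr hmM)
  have hss : s ≤ s' := Real.log_le_log hτ hτT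
  have key := aux_J_bound hss hTτ hc0
  have e1 : (s - c) / 2 = s / 2 - c / 2 := by ring
  have e2 : (s' - c) / 2 = s' / 2 - c / 2 := by ring
  linarith [key]

/- ## Main theorem -/

/-- Birkhoff: a positive linear map on the positive orthant of
`ℝⁿ` with finite projective diameter `Δ(E)` is a strict contraction in the
Hilbert projective metric, with contraction ratio at most `tanh(Δ(E)/4) < 1`. -/
theorem birkhoff_contraction
    {n : ℕ} (hn : 0 < n) (E : (Fin n → ℝ) →ₗ[ℝ] (Fin n → ℝ))
    (hE : ∀ x : Fin n → ℝ, (∀ i, 0 < x i) → ∀ i, 0 < E x i)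
    (Δ : ℝ)
    (hΔ : ∀ x y : Fin n → ℝ, (∀ i, 0 < x i) → (∀ i, 0 < y i) →
      dHpos (E x) (E y) ≤ Δ) :
    Real.tanh (Δ / 4) < 1 ∧
    ∀ x y : Fin n → ℝ, (∀ i, 0 < x i) → (∀ i, 0 < y i) →
      dHpos (E x) (E y) ≤ Real.tanh (Δ / 4) * dHpos x y := by
  haveI : Nonempty (Fin n) := Fin.pos_iff_nonempty.mp hn
  -- Δ is nonnegative
  have hΔ0 : 0 ≤ Δ := by
    have h1 : ∀ i : Fin n, (0:ℝ) < (fun _ : Fin n => (1:ℝ)) i := fun _ => one_pos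
    have h2 := hΔ (fun _ => 1) (fun _ => 1) h1 h1
    have h3 : ∀ i, E (fun _ => (1:ℝ)) i / E (fun _ => (1:ℝ)) i = 1 :=
      fun i => div_self (hE _ h1 i).ne'
    rw [dHpos] at h2
    simp only [h3, ciSup_const, ciInf_const, div_one, Real.log_one] at h2
    exact h2
  refine ⟨aux_tanh_lt_one _, ?_⟩
  intro x y hx hy
  set q : Fin n → ℝ := fun i => x i / y i with hqdef
  set m := ⨅ i, q i with hmdef
  set M := ⨆ i, q i with hMdef
  have hq : ∀ i, 0 < q i := fun i => div_pos (hx i) (hy i)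
  have hm : 0 < m := by
    obtain ⟨i, hi⟩ := exists_eq_ciInf_of_finite (f := q)
    rw [hmdef, ← hi]; exact hq i
  have hmle : ∀ i, m ≤ q i := fun i => ciInf_le (Set.finite_range q).bddBelow i
  have hleM : ∀ i, q i ≤ M := fun i => le_ciSup (Set.finite_range q).bddAbove i
  have hmM : m ≤ M := (hmle (Classical.arbitrary _)).trans (hleM (Classical.arbitrary _))
  have hdxy : dHpos x y = Real.log (M / m) := rfl
  -- main estimate for small ε
  have key : ∀ ε : ℝ, ε ∈ Set.Ioo 0 m →
      dHpos (E x) (E y) ≤ Real.tanh (Δ / 4) * Real.log ((M + ε) / (m - ε)) := by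
    rintro ε ⟨hε0, hεm⟩
    set u : Fin n → ℝ := x - (m - ε) • y with hu
    set v : Fin n → ℝ := (M + ε) • y - x with hv
    have hu_pos : ∀ i, 0 < u i := by
      intro i
      have h1 : m * y i ≤ x i := by
        rw [← le_div_iff₀ (hy i)]; exact hmle i
      have : u i = x i - (m - ε) * y i := rfl
      rw [this]
      nlinarith [hy i]
    have hv_pos : ∀ i, 0 < v i := by
      intro i
      have h1 : x i ≤ M * y i := by
        rw [← div_le_iff₀ (hy i)]; exact hleM i
      have : v i = (M + ε) * y i - x i := rfl
      rw [this]
      nlinarith [hy i]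
    have ha : ∀ i, 0 < E u i := hE u hu_pos
    have hb : ∀ i, 0 < E v i := hE v hv_pos
    have hEy : ∀ i, 0 < E y i := hE y hy
    -- linear relations
    have hEx_eq : ∀ i, E x i = E u i + (m - ε) * E y i := by
      intro i
      have : E u = E x - (m - ε) • E y := by rw [hu, map_sub, map_smul]
      have h2 := congrFun this i
      simp only [Pi.sub_apply, Pi.smul_apply, smul_eq_mul] at h2
      linarith
    have hsum_eq : ∀ i, (M - m + 2 * ε) * E y i = E u i + E v i := by
      intro i
      have h1 : E u + E v = E (u + v) := (map_add E u v).symm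
      have h2 : u + v = (M - m + 2 * ε) • y := by
        rw [hu, hv]; funext j
        simp only [Pi.add_apply, Pi.sub_apply, Pi.smul_apply, smul_eq_mul]
        ring
      have h3 := congrFun (h1.trans (by rw [h2, map_smul])) i
      simp only [Pi.add_apply, Pi.smul_apply, smul_eq_mul] at h3
      linarith
    have hP : (0:ℝ) < M - m + 2 * ε := by linarith
    set t : Fin n → ℝ := fun i => E v i / E u i with htdef
    have ht : ∀ i, 0 < t i := fun i => div_pos (hb i) (ha i)
    set τ := ⨅ i, t i with hτdef
    set T := ⨆ i, t i with hTdef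
    have hτ : 0 < τ := by
      obtain ⟨i, hi⟩ := exists_eq_ciInf_of_finite (f := t)
      rw [hτdef, ← hi]; exact ht i
    have hτle : ∀ i, τ ≤ t i := fun i => ciInf_le (Set.finite_range t).bddBelow i
    have hleT : ∀ i, t i ≤ T := fun i => le_ciSup (Set.finite_range t).bddAbove i
    have hτT : τ ≤ T := (hτle (Classical.arbitrary _)).trans (hleT (Classical.arbitrary _))
    have hT : 0 < T := lt_of_lt_of_le hτ hτT
    -- ratio formula
    have hratio : ∀ i, E x i / E y i = ((M + ε) + (m - ε) * t i) / (1 + t i) := by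
      intro i
      have hEyi : E y i = (E u i + E v i) / (M - m + 2 * ε) := by
        rw [eq_div_iff hP.ne']; linarith [hsum_eq i]
      rw [hEx_eq i, hEyi, htdef]
      have hab : (0:ℝ) < E u i + E v i := by
        have := ha i; have := hb i; linarith
      have h1t : (1:ℝ) + E v i / E u i ≠ 0 := by
        have := ht i; simp only [htdef] at this ⊢; linarith
      have hP2 : M - m + ε * 2 ≠ 0 := by linarith
      field_simp [hP.ne', (ha i).ne', hab.ne', hP2]
      ring
    -- monotonicity of the rational function
    have hψmono : ∀ t1 t2 : ℝ, 0 < t1 → t1 ≤ t2 →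
        ((M + ε) + (m - ε) * t2) / (1 + t2) ≤ ((M + ε) + (m - ε) * t1) / (1 + t1) := by
      intro t1 t2 h1 h12
      rw [div_le_div_iff₀ (by linarith) (by linarith)]
      nlinarith
    have hψpos : ∀ t' : ℝ, 0 < t' → 0 < ((M + ε) + (m - ε) * t') / (1 + t') := by
      intro t' h
      apply div_pos _ (by linarith)
      nlinarith
    -- sup and inf bounds
    have hsup : (⨆ i, E x i / E y i) ≤ ((M + ε) + (m - ε) * τ) / (1 + τ) := by
      apply ciSup_le
      intro i
      rw [hratio i]
      exact hψmono τ (t i) hτ (hτle i)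
    have hinf : ((M + ε) + (m - ε) * T) / (1 + T) ≤ ⨅ i, E x i / E y i := by
      apply le_ciInf
      intro i
      rw [hratio i]
      exact hψmono (t i) T (ht i) (hleT i)
    have hinf_pos : 0 < ⨅ i, E x i / E y i := lt_of_lt_of_le (hψpos T hT) hinf
    have hsup_pos : 0 < ⨆ i, E x i / E y i := by
      refine lt_of_lt_of_le (div_pos (hE x hx (Classical.arbitrary _))
        (hEy (Classical.arbitrary _))) ?_
      exact le_ciSup (Set.finite_range fun i => E x i / E y i).bddAbove _
    -- the Δ bound on the image of u, v
    have hTτΔ : Real.log T - Real.log τ ≤ Δ := by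
      have h1 := hΔ v u hv_pos hu_pos
      rw [dHpos] at h1
      rw [← Real.log_div hT.ne' hτ.ne']
      exact h1
    -- assemble
    have hcore := aux_core (show (0:ℝ) < m - ε by linarith)
      (show m - ε ≤ M + ε by linarith) hτ hτT hTτΔ
    calc dHpos (E x) (E y)
        = Real.log (⨆ i, E x i / E y i) - Real.log (⨅ i, E x i / E y i) := by
          rw [dHpos, Real.log_div hsup_pos.ne' hinf_pos.ne']
      _ ≤ Real.log (((M + ε) + (m - ε) * τ) / (1 + τ))
          - Real.log (((M + ε) + (m - ε) * T) / (1 + T)) := by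
          have l1 := Real.log_le_log hsup_pos hsup
          have l2 := Real.log_le_log (hψpos T hT) hinf
          linarith
      _ ≤ Real.tanh (Δ / 4) * Real.log ((M + ε) / (m - ε)) := by
          have : ∀ ρ : ℝ, (M + ε) + (m - ε) * ρ = (M + ε) + (m - ε) * ρ := fun _ => rfl
          calc Real.log (((M + ε) + (m - ε) * τ) / (1 + τ))
              - Real.log (((M + ε) + (m - ε) * T) / (1 + T))
              = Real.log (((M + ε) + (m - ε) * τ) / (1 + τ))
              - Real.log (((M + ε) + (m - ε) * T) / (1 + T)) := rfl
            _ ≤ Real.tanh (Δ / 4) * Real.log ((M + ε) / (m - ε)) := by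
                have := hcore
                linarith [hcore]
  -- pass to the limit ε → 0⁺
  have hlim : Filter.Tendsto (fun ε : ℝ => Real.tanh (Δ / 4) * Real.log ((M + ε) / (m - ε)))
      (nhdsWithin 0 (Set.Ioi 0)) (nhds (Real.tanh (Δ / 4) * Real.log (M / m))) := by
    apply Filter.Tendsto.mono_left _ nhdsWithin_le_nhds
    have hcont : ContinuousAt (fun ε : ℝ => Real.log ((M + ε) / (m - ε))) 0 := by
      apply ContinuousAt.log
      · exact ((continuousAt_const.add continuousAt_id).div
          (continuousAt_const.sub continuousAt_id) (by simpa using hm.ne'))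
      · simp only [add_zero, sub_zero]
        exact (div_pos (lt_of_lt_of_le hm hmM) hm).ne'
    have := hcont.tendsto.const_mul (Real.tanh (Δ / 4))
    simpa using this
  have hfinal : dHpos (E x) (E y) ≤ Real.tanh (Δ / 4) * Real.log (M / m) := by
    apply ge_of_tendsto hlim
    filter_upwards [Ioo_mem_nhdsGT_of_mem (Set.mem_Ico.mpr ⟨le_refl 0, hm⟩)] with ε hε
    exact key ε hε
  rw [hdxy]
  exact hfinal
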